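/- Let x_1, ..., x_d be complex numbers with |x_j| < 1 for all j. Then the sum over all integer tuples 0 < k_1 < k_2 < ... < k_d of the product x_1^{k_1} x_2^{k_2} ... x_d^{k_d} equals the product over j = 1 to d of (x_j x_{j+1} ... x_d)/(1 - x_j x_{j+1} ... x_d). -/

import Mathlib

lemma aux_hasSum : ∀ (n : ℕ) (f : Fin n → ℕ → ℂ), (∀ j, Summable fun k => ‖f j k‖) →
    HasSum (fun m : Fin n → ℕ => ∏ j, f j (m j)) (∏ j, ∑' k, f j k) ∧
    Summable (fun m : Fin n → ℕ => ‖∏ j, f j (m j)‖) := by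
  intro n
  induction n with
  | zero =>
    intro f _
    refine ⟨?_, .of_finite⟩
    simpa using hasSum_unique (α := ℂ) (f := fun m : Fin 0 → ℕ => ∏ j, f j (m j))
  | succ n IH =>
    intro f hf
    obtain ⟨IH1, IH2⟩ := IH (fun j k => f j.succ k) (fun j => hf j.succ)
    have hs0 : HasSum (fun k => f 0 k) (∑' k, f 0 k) := ((hf 0).of_norm).hasSum
    have hn : Summable fun p : ℕ × (Fin n → ℕ) =>
        ‖f 0 p.1 * ∏ j : Fin n, f j.succ (p.2 j)‖ :=
      Summable.mul_norm (f := fun k => f 0 k)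
        (g := fun m : Fin n → ℕ => ∏ j : Fin n, f j.succ (m j)) (hf 0) IH2
    have hmul : HasSum (fun p : ℕ × (Fin n → ℕ) =>
        f 0 p.1 * ∏ j : Fin n, f j.succ (p.2 j))
        ((∑' k, f 0 k) * ∏ j : Fin n, ∑' k, f j.succ k) :=
      HasSum.mul (f := fun k => f 0 k)
        (g := fun m : Fin n → ℕ => ∏ j : Fin n, f j.succ (m j))
        hs0 IH1 hn.of_norm
    let e : (Fin (n+1) → ℕ) ≃ ℕ × (Fin n → ℕ) := (Fin.consEquiv fun _ => ℕ).symm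
    have key : ∀ m : Fin (n+1) → ℕ,
        ∏ j, f j (m j) = f 0 (m 0) * ∏ j : Fin n, f j.succ (m j.succ) := by
      intro m; rw [Fin.prod_univ_succ]
    constructor
    · rw [Fin.prod_univ_succ]
      have h2 := (e.hasSum_iff (f := fun p : ℕ × (Fin n → ℕ) =>
        f 0 p.1 * ∏ j : Fin n, f j.succ (p.2 j))).2 hmul
      convert h2 using 1
      ext m
      rw [key m]; simp only [e, Fin.consEquiv, Function.comp]; rfl
    · have h2 := (e.summable_iff (f := fun p : ℕ × (Fin n → ℕ) =>
        ‖f 0 p.1 * ∏ j : Fin n, f j.succ (p.2 j)‖)).2 hn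
      convert h2 using 1
      ext m
      rw [key m]; simp only [e, Fin.consEquiv, Function.comp]; rfl

def smFun (d : ℕ) (m : Fin (d+1) → ℕ) : Fin (d+1) → ℕ :=
  fun j => ∑ i ∈ Finset.Iic j, (m i + 1)

lemma Iic_succ_eq (d : ℕ) (i : Fin d) :
    Finset.Iic (i.succ : Fin (d+1)) = insert i.succ (Finset.Iic i.castSucc) := by
  ext a; simp [Fin.le_def, Fin.lt_def, Fin.val_succ, Fin.coe_castSucc, Fin.ext_iff]; omega

lemma succ_not_mem (d : ℕ) (i : Fin d) :
    (i.succ : Fin (d+1)) ∉ Finset.Iic i.castSucc := by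
  simp [Fin.le_def, Fin.val_succ, Fin.coe_castSucc]

lemma smFun_zero (d : ℕ) (m : Fin (d+1) → ℕ) : smFun d m 0 = m 0 + 1 := by
  unfold smFun
  rw [show Finset.Iic (0 : Fin (d+1)) = {0} by ext a; simp [Fin.le_zero_iff]]
  simp

lemma smFun_succ (d : ℕ) (m : Fin (d+1) → ℕ) (i : Fin d) :
    smFun d m i.succ = smFun d m i.castSucc + (m i.succ + 1) := by
  unfold smFun
  rw [Iic_succ_eq, Finset.sum_insert (succ_not_mem d i)]
  ring

lemma smFun_mono (d : ℕ) (m : Fin (d+1) → ℕ) : StrictMono (smFun d m) := by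
  intro a b hab
  apply Finset.sum_lt_sum_of_subset
  · intro i hi; simp only [Finset.mem_Iic] at *; exact hi.trans hab.le
  · exact Finset.mem_Iic.2 le_rfl
  · simp [Finset.mem_Iic, hab.not_ge]
  · omega
  · intros; omega

lemma smFun_pos (d : ℕ) (m : Fin (d+1) → ℕ) (j : Fin (d+1)) : 0 < smFun d m j := by
  apply Finset.sum_pos
  · intros; omega
  · exact ⟨j, Finset.mem_Iic.2 le_rfl⟩

noncomputable def smEquiv (d : ℕ) :
    (Fin (d+1) → ℕ) ≃ {k : Fin (d+1) → ℕ // StrictMono k ∧ ∀ j, 0 < k j} := by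
  apply Equiv.ofBijective
    (fun m => (⟨smFun d m, smFun_mono d m, smFun_pos d m⟩ :
      {k : Fin (d+1) → ℕ // StrictMono k ∧ ∀ j, 0 < k j}))
  constructor
  · intro m m' h
    simp only [Subtype.mk.injEq] at h
    funext j
    induction j using Fin.induction with
    | zero =>
      have h0 := congrFun h 0
      rw [smFun_zero, smFun_zero] at h0
      omega
    | succ i ih =>
      have h1 := congrFun h i.castSucc
      have h2 := congrFun h i.succ
      rw [smFun_succ, smFun_succ, h1] at h2
      omega
  · rintro ⟨k, hk, hk0⟩
    refine ⟨fun j => Fin.cases (k 0 - 1) (fun i => k i.succ - k i.castSucc - 1) j, ?_⟩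
    simp only [Subtype.mk.injEq]
    funext j
    induction j using Fin.induction with
    | zero =>
      rw [smFun_zero]
      simp only [Fin.cases_zero]
      have := hk0 0
      omega
    | succ i ih =>
      rw [smFun_succ, ih]
      have := hk (Fin.castSucc_lt_succ (i := i))
      simp only [Fin.cases_succ]
      omega

lemma prod_pow_smFun (d : ℕ) (x : Fin (d+1) → ℂ) (m : Fin (d+1) → ℕ) :
    ∏ j, x j ^ (smFun d m j) =
      ∏ i : Fin (d+1), (∏ t ∈ Finset.univ.filter (fun t => i ≤ t), x t) ^ (m i + 1) := by
  unfold smFun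
  have step1 : ∀ j : Fin (d+1), x j ^ (∑ i ∈ Finset.Iic j, (m i + 1)) =
      ∏ i ∈ Finset.Iic j, x j ^ (m i + 1) := by
    intro j; rw [Finset.prod_pow_eq_pow_sum]
  simp_rw [step1]
  rw [Finset.prod_comm' (s := Finset.univ) (t := fun j => Finset.Iic j)
    (t' := Finset.univ) (s' := fun i => Finset.univ.filter (fun j => i ≤ j))
    (by intro j i; simp [Finset.mem_Iic])]
  exact Finset.prod_congr rfl fun i _ => Finset.prod_pow _ _ _

theorem stmt_1 (d : ℕ) (x : Fin (d + 1) → ℂ) (hx : ∀ j, ‖x j‖ < 1) :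
    ∑' k : {k : Fin (d + 1) → ℕ // StrictMono k ∧ ∀ j, 0 < k j},
        ∏ j, x j ^ (k.1 j) =
      ∏ j : Fin (d + 1),
        (∏ i ∈ Finset.univ.filter (fun i => j ≤ i), x i) /
          (1 - ∏ i ∈ Finset.univ.filter (fun i => j ≤ i), x i) := by
  set y : Fin (d+1) → ℂ := fun j => ∏ i ∈ Finset.univ.filter (fun i => j ≤ i), x i with hy_def
  have hy : ∀ j, ‖y j‖ < 1 := by
    intro j
    rw [hy_def]
    simp only
    rw [norm_prod]
    have hj : j ∈ Finset.univ.filter (fun i => j ≤ i) := by simp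
    rw [← Finset.prod_erase_mul _ _ hj]
    calc (∏ i ∈ (Finset.univ.filter (fun i => j ≤ i)).erase j, ‖x i‖) * ‖x j‖
        ≤ 1 * ‖x j‖ := by
          apply mul_le_mul_of_nonneg_right ?_ (norm_nonneg _)
          exact Finset.prod_le_one (fun i _ => norm_nonneg _) (fun i _ => (hx i).le)
      _ < 1 := by simpa using hx j
  set f : Fin (d+1) → ℕ → ℂ := fun j k => y j ^ (k + 1) with hf_def
  have hfs : ∀ j, Summable fun k => ‖f j k‖ := by
    intro j
    have h1 : Summable fun k : ℕ => ‖y j‖ ^ k * ‖y j‖ :=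
      (summable_geometric_of_lt_one (norm_nonneg _) (hy j)).mul_right _
    apply h1.congr
    intro k
    rw [hf_def]
    simp [norm_pow, pow_succ]
  obtain ⟨HS, _⟩ := aux_hasSum (d+1) f hfs
  have htsum : ∀ j, (∑' k, f j k) = y j / (1 - y j) := by
    intro j
    have h1 : (∑' k : ℕ, y j * y j ^ k) = y j * ∑' k : ℕ, y j ^ k := tsum_mul_left
    have h2 : (∑' k, f j k) = ∑' k : ℕ, y j * y j ^ k := by
      apply tsum_congr; intro k; rw [hf_def]; simp [pow_succ]; ring
    rw [h2, h1, tsum_geometric_of_norm_lt_one (hy j), div_eq_mul_inv]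
  have key : ∑' m : Fin (d+1) → ℕ, ∏ j, f j (m j) =
      ∑' k : {k : Fin (d + 1) → ℕ // StrictMono k ∧ ∀ j, 0 < k j},
        ∏ j, x j ^ (k.1 j) := by
    rw [← (smEquiv d).tsum_eq (f := fun k : {k : Fin (d + 1) → ℕ //
      StrictMono k ∧ ∀ j, 0 < k j} => ∏ j, x j ^ (k.1 j))]
    apply tsum_congr
    intro m
    show ∏ j, f j (m j) = ∏ j, x j ^ ((smEquiv d m).1 j)
    have : (smEquiv d m).1 = smFun d m := rfl
    rw [this, prod_pow_smFun d x m]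
  rw [← key, HS.tsum_eq]
  exact Finset.prod_congr rfl fun j _ => htsum j
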